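/- If h : ℝ → ℝ is differentiable with h'(x) ∈ [0,1] for all x (e.g. h = tanh), and v, w ∈ ℝ^D satisfy wᵀv ≥ −1 + δ for some δ > 0, then the planar flow T(z) = z + v·h(wᵀz + b) has strictly positive Jacobian determinant everywhere: det(∂T/∂z) = 1 + h'(wᵀz + b)(wᵀv) ≥ δ' > 0 for some δ' depending on δ. -/

import Mathlib

open scoped RealInnerProductSpace

lemma det_rank_one {D : ℕ} (v w : EuclideanSpace ℝ (Fin D)) :
    LinearMap.det ((LinearMap.id : EuclideanSpace ℝ (Fin D) →ₗ[ℝ] EuclideanSpace ℝ (Fin D))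
      + ((innerSL ℝ w).smulRight v).toLinearMap) = 1 + ⟪w, v⟫ := by
  classical
  set bb := (EuclideanSpace.basisFun (Fin D) ℝ).toBasis
  rw [← LinearMap.det_toMatrix bb]
  have hM : LinearMap.toMatrix bb bb ((LinearMap.id : EuclideanSpace ℝ (Fin D) →ₗ[ℝ] _)
      + ((innerSL ℝ w).smulRight v).toLinearMap)
      = 1 + Matrix.replicateCol Unit (fun i => v i) * Matrix.replicateRow Unit (fun j => w j) := by
    ext i j
    simp [LinearMap.toMatrix_apply, Matrix.one_apply, Matrix.mul_apply,
      bb, EuclideanSpace.basisFun_apply, real_inner_comm, mul_comm, EuclideanSpace.inner_single_right]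
  rw [hM, Matrix.det_one_add_replicateCol_mul_replicateRow]
  simp [dotProduct, PiLp.inner_apply, mul_comm]

/-- If `h' ∈ [0,1]` everywhere and `⟪w,v⟫ ≥ −1 + δ` for some `δ > 0`, then the
planar flow `T(z) = z + h(⟪w,z⟫ + b) • v` has Jacobian determinant
`1 + h'(⟪w,z⟫ + b) ⟪w,v⟫` bounded below by some `δ' > 0` everywhere. -/
theorem stmt12 {D : ℕ} (v w : EuclideanSpace ℝ (Fin D)) (b : ℝ)
    (h : ℝ → ℝ) (hh : Differentiable ℝ h)
    (hh' : ∀ t, deriv h t ∈ Set.Icc (0 : ℝ) 1)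
    (δ : ℝ) (hδ : 0 < δ) (hwv : ⟪w, v⟫ ≥ -1 + δ) :
    ∃ δ' > (0 : ℝ), ∀ z : EuclideanSpace ℝ (Fin D),
      LinearMap.det
          (fderiv ℝ (fun u : EuclideanSpace ℝ (Fin D) =>
            u + h (⟪w, u⟫ + b) • v) z).toLinearMap =
        1 + deriv h (⟪w, z⟫ + b) * ⟪w, v⟫ ∧
      δ' ≤ 1 + deriv h (⟪w, z⟫ + b) * ⟪w, v⟫ := by
  refine ⟨min δ 1, lt_min hδ one_pos, fun z => ?_⟩
  set s := ⟪w, z⟫ + b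
  set c := deriv h s
  have hc := hh' s
  -- derivative computation
  have hg : HasFDerivAt (fun u : EuclideanSpace ℝ (Fin D) => ⟪w, u⟫ + b)
      (innerSL ℝ w) z := by
    simpa using ((innerSL ℝ w).hasFDerivAt.add_const b)
  have hhg : HasFDerivAt (fun u : EuclideanSpace ℝ (Fin D) => h (⟪w, u⟫ + b))
      (c • innerSL ℝ w) z :=
    ((hh s).hasDerivAt.comp_hasFDerivAt z hg)
  have hT : HasFDerivAt (fun u : EuclideanSpace ℝ (Fin D) => u + h (⟪w, u⟫ + b) • v)
      (ContinuousLinearMap.id ℝ _ + (innerSL ℝ w).smulRight (c • v)) z := by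
    have := (hasFDerivAt_id z).add (hhg.smul_const v)
    refine HasFDerivAt.congr_fderiv this ?_
    ext u
    simp [smul_smul, mul_comm]
  have hdet : LinearMap.det (fderiv ℝ (fun u : EuclideanSpace ℝ (Fin D) =>
      u + h (⟪w, u⟫ + b) • v) z).toLinearMap = 1 + c * ⟪w, v⟫ := by
    rw [hT.fderiv]
    have := det_rank_one (c • v) w
    simp only [real_inner_smul_right] at this
    convert this using 2
    rw [ContinuousLinearMap.coe_add, ContinuousLinearMap.coe_id]
  refine ⟨hdet, ?_⟩
  rcases le_or_gt 0 (⟪w, v⟫ : ℝ) with hp | hn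
  · have : (0:ℝ) ≤ c * ⟪w, v⟫ := mul_nonneg hc.1 hp
    calc min δ 1 ≤ 1 := min_le_right _ _
    _ ≤ 1 + c * ⟪w, v⟫ := by linarith
  · have : c * ⟪w, v⟫ ≥ 1 * ⟪w, v⟫ := by
      apply mul_le_mul_of_nonpos_right hc.2 hn.le
    have h2 : (⟪w, v⟫ : ℝ) ≥ -1 + δ := hwv
    calc min δ 1 ≤ δ := min_le_left _ _
    _ ≤ 1 + c * ⟪w, v⟫ := by nlinarith
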